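/- Let D be a category that has all pushouts. Then for every span (K, c) ← (I, a) → (J, b) in the Grothendieck twist Tw(D) in which the morphism (I, a) → (J, b) has an injective underlying function I → J, the pushout of the span exists in Tw(D). -/

import Mathlib

open CategoryTheory CategoryTheory.Limits

universe v u

/-- An object of the Grothendieck twist `Tw(D)`: a finite index type together with a
family of objects of `D`. -/
structure TwObj (D : Type u) [Category.{v} D] : Type (max u 1) where
  ι : Type
  [fin : Finite ι]
  obj : ι → D

attribute [instance] TwObj.fin

/-- A morphism of the Grothendieck twist `Tw(D)`: a function of index types together with
componentwise morphisms of `D`. -/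
structure TwHom {D : Type u} [Category.{v} D] (X Y : TwObj D) : Type (max v 1) where
  toFun : X.ι → Y.ι
  map : ∀ i, X.obj i ⟶ Y.obj (toFun i)

theorem TwHom.hext {D : Type u} [Category.{v} D] {X Y : TwObj D} {f g : TwHom X Y}
    (h1 : f.toFun = g.toFun) (h2 : HEq f.map g.map) : f = g := by
  cases f; cases g; cases h1; cases h2; rfl

instance (D : Type u) [Category.{v} D] : Category (TwObj D) where
  Hom X Y := TwHom X Y
  id X := ⟨id, fun i => 𝟙 _⟩
  comp f g := ⟨g.toFun ∘ f.toFun, fun i => f.map i ≫ g.map (f.toFun i)⟩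
  id_comp f := TwHom.hext rfl (heq_of_eq (funext fun i => Category.id_comp _))
  comp_id f := TwHom.hext rfl (heq_of_eq (funext fun i => Category.comp_id _))
  assoc f g h := TwHom.hext rfl (heq_of_eq (funext fun i => Category.assoc _ _ _))


namespace TwAux

variable {D : Type u} [Category.{v} D]

/-- Data of a "generalized pushout": glue a base object `c` with objects `b i`
along spans `c ⟵ a i ⟶ b i`, together with its universal property. -/
structure Glue {S : Type} (c : D) (b : S → D) (a : S → D)
    (u : ∀ i, a i ⟶ c) (v : ∀ i, a i ⟶ b i) where
  Q : D
  p : c ⟶ Q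
  q : ∀ i, b i ⟶ Q
  comm : ∀ i, u i ≫ p = v i ≫ q i
  desc : ∀ {Z : D} (p' : c ⟶ Z) (q' : ∀ i, b i ⟶ Z),
      (∀ i, u i ≫ p' = v i ≫ q' i) → (Q ⟶ Z)
  p_desc : ∀ {Z : D} (p' : c ⟶ Z) (q' : ∀ i, b i ⟶ Z) (h), p ≫ desc p' q' h = p'
  q_desc : ∀ {Z : D} (p' : c ⟶ Z) (q' : ∀ i, b i ⟶ Z) (h) (i), q i ≫ desc p' q' h = q' i
  uniq : ∀ {Z : D} (p' : c ⟶ Z) (q' : ∀ i, b i ⟶ Z) (h) (m : Q ⟶ Z),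
      p ≫ m = p' → (∀ i, q i ≫ m = q' i) → m = desc p' q' h

/-- Glue over the empty index type. -/
def glueEmpty (c : D) (b a : PEmpty → D) (u : ∀ i, a i ⟶ c) (v : ∀ i, a i ⟶ b i) :
    Glue c b a u v where
  Q := c
  p := 𝟙 c
  q i := i.elim
  comm i := i.elim
  desc p' _ _ := p'
  p_desc _ _ _ := Category.id_comp _
  q_desc _ _ _ i := i.elim
  uniq _ _ _ m hm _ := by simpa using hm

/-- Extend glue data by one more span, using a pushout. -/
noncomputable def glueOption [HasPushouts D] {α : Type} (c : D) (b a : Option α → D)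
    (u : ∀ i, a i ⟶ c) (v : ∀ i, a i ⟶ b i)
    (G : Glue c (fun i => b (some i)) (fun i => a (some i))
      (fun i => u (some i)) (fun i => v (some i))) :
    Glue c b a u v where
  Q := pushout (u none ≫ G.p) (v none)
  p := G.p ≫ pushout.inl (u none ≫ G.p) (v none)
  q i := match i with
    | none => pushout.inr (u none ≫ G.p) (v none)
    | some i => G.q i ≫ pushout.inl (u none ≫ G.p) (v none)
  comm i := match i with
    | none => by rw [← Category.assoc]; exact pushout.condition
    | some i => by rw [← Category.assoc, G.comm i, Category.assoc]
  desc {Z} p' q' h :=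
    pushout.desc (G.desc p' (fun i => q' (some i)) (fun i => h (some i))) (q' none)
      (by rw [Category.assoc, G.p_desc]; exact h none)
  p_desc {Z} p' q' h := by rw [Category.assoc, pushout.inl_desc, G.p_desc]
  q_desc {Z} p' q' h i := match i with
    | none => by exact pushout.inr_desc _ _ _
    | some i => by rw [Category.assoc, pushout.inl_desc, G.q_desc]
  uniq {Z} p' q' h m hp hq := by
    apply pushout.hom_ext
    · rw [pushout.inl_desc]
      refine G.uniq _ _ _ _ ?_ ?_
      · rw [← Category.assoc]; exact hp
      · intro i; rw [← Category.assoc]; exact hq (some i)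
    · rw [pushout.inr_desc]; exact hq none

lemma eqToHom_comp_fun {α : Type} (b : α → D) {Q : D} (q : ∀ i, b i ⟶ Q)
    {i₁ i₂ : α} (h : i₁ = i₂) (hb : b i₂ = b i₁) : eqToHom hb ≫ q i₁ = q i₂ := by
  subst h; simp

/-- Transport glue data along an equivalence of index types. -/
def glueEquiv {α β : Type} (e : α ≃ β) (c : D) (b a : β → D)
    (u : ∀ i, a i ⟶ c) (v : ∀ i, a i ⟶ b i)
    (G : Glue c (fun i => b (e i)) (fun i => a (e i))
      (fun i => u (e i)) (fun i => v (e i))) :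
    Glue c b a u v where
  Q := G.Q
  p := G.p
  q j := eqToHom (congrArg b (e.apply_symm_apply j).symm) ≫ G.q (e.symm j)
  comm j := by
    obtain ⟨i, rfl⟩ : ∃ i, e i = j := ⟨e.symm j, e.apply_symm_apply j⟩
    rw [eqToHom_comp_fun (fun x => b (e x)) G.q (e.symm_apply_apply i)]
    exact G.comm i
  desc {Z} p' q' h := G.desc p' (fun i => q' (e i)) (fun i => h (e i))
  p_desc {Z} p' q' h := G.p_desc _ _ _
  q_desc {Z} p' q' h j := by
    rw [Category.assoc, G.q_desc]
    exact eqToHom_comp_fun b q' (e.apply_symm_apply j) _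
  uniq {Z} p' q' h m hp hq := by
    refine G.uniq _ _ _ _ hp ?_
    intro i
    have hh := hq (e i)
    rw [eqToHom_comp_fun (fun x => b (e x)) G.q (e.symm_apply_apply i)] at hh
    exact hh

lemma glue_nonempty [HasPushouts D] (S : Type) [Finite S] (c : D) (b a : S → D)
    (u : ∀ i, a i ⟶ c) (v : ∀ i, a i ⟶ b i) : Nonempty (Glue c b a u v) := by
  revert b a u v
  induction S using Finite.induction_empty_option with
  | of_equiv e ih =>
    exact fun b a u v => ⟨glueEquiv e c b a u v (ih _ _ _ _).some⟩
  | h_empty => exact fun b a u v => ⟨glueEmpty c b a u v⟩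
  | h_option ih => exact fun b a u v => ⟨glueOption c b a u v (ih _ _ _ _).some⟩

@[simp] lemma comp_toFun {X Y Z : TwObj D} (F : X ⟶ Y) (H : Y ⟶ Z) (i : X.ι) :
    (F ≫ H).toFun i = H.toFun (F.toFun i) := rfl

@[simp] lemma comp_map {X Y Z : TwObj D} (F : X ⟶ Y) (H : Y ⟶ Z) (i : X.ι) :
    (F ≫ H).map i = F.map i ≫ H.map (F.toFun i) := rfl

lemma ext' {X Y : TwObj D} {F H : TwHom X Y} (h1 : ∀ i, F.toFun i = H.toFun i)
    (h2 : ∀ i, F.map i ≫ eqToHom (congrArg Y.obj (h1 i)) = H.map i) : F = H := by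
  obtain ⟨Ff, Fm⟩ := F; obtain ⟨Hf, Hm⟩ := H
  obtain rfl : Ff = Hf := funext h1
  refine TwHom.hext rfl (heq_of_eq (funext fun i => ?_))
  simpa using h2 i

lemma congr_map {X Y : TwObj D} {F H : TwHom X Y} (h : F = H) (i : X.ι) :
    F.map i ≫ eqToHom (congrArg Y.obj (congrFun (congrArg TwHom.toFun h) i)) = H.map i := by
  subst h; simp

lemma hom_of_sigma_eq {T : Type} (o : T → D) {b : D} :
    ∀ {x y : Σ t : T, b ⟶ o t} (e : x = y),
      x.2 ≫ eqToHom (congrArg o (congrArg Sigma.fst e)) = y.2 := by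
  rintro ⟨t, m⟩ _ rfl; simp

lemma sigma_hom_ext {T : Type} (o : T → D) {b : D} {t₁ t₂ : T} (ht : t₁ = t₂)
    {m₁ : b ⟶ o t₁} {m₂ : b ⟶ o t₂} (hm : m₁ ≫ eqToHom (congrArg o ht) = m₂) :
    (⟨t₁, m₁⟩ : Σ t, b ⟶ o t) = ⟨t₂, m₂⟩ := by
  subst ht; simpa using hm

lemma ext_sigma {X Y : TwObj D} {F H : TwHom X Y}
    (h : ∀ i, (⟨F.toFun i, F.map i⟩ : Σ t : Y.ι, X.obj i ⟶ Y.obj t) = ⟨H.toFun i, H.map i⟩) :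
    F = H :=
  ext' (fun i => congrArg Sigma.fst (h i)) (fun i => hom_of_sigma_eq Y.obj (h i))

lemma hom_sigma_congr {X Y : TwObj D} {F H : TwHom X Y} (h : F = H) (i : X.ι) :
    (⟨F.toFun i, F.map i⟩ : Σ t : Y.ι, X.obj i ⟶ Y.obj t) = ⟨H.toFun i, H.map i⟩ := by
  subst h; rfl

section Main

variable [HasPushouts D] {A B C : TwObj D} (f : A ⟶ B) (g : A ⟶ C)

/-- The fiber of the index map of `g` over `k`. -/
abbrev Fib (k : C.ι) : Type := {i : A.ι // g.toFun i = k}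

variable (G : ∀ k : C.ι, Glue (C.obj k) (fun i : Fib g k => B.obj (f.toFun i.1))
  (fun i : Fib g k => A.obj i.1)
  (fun i => g.map i.1 ≫ eqToHom (congrArg C.obj i.2)) (fun i => f.map i.1))

/-- The candidate pushout object. -/
abbrev PObj : TwObj D where
  ι := C.ι ⊕ {j : B.ι // ∀ i, f.toFun i ≠ j}
  obj x := match x with
    | .inl k => (G k).Q
    | .inr j => B.obj j.1

def inC : C ⟶ PObj f g G := ⟨Sum.inl, fun k => (G k).p⟩

open Classical in
noncomputable def inBaux (j : B.ι) :
    Σ t : (PObj f g G).ι, (B.obj j ⟶ (PObj f g G).obj t) :=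
  if h : ∃ i, f.toFun i = j then
    ⟨.inl (g.toFun h.choose),
      eqToHom (congrArg B.obj h.choose_spec.symm) ≫ (G (g.toFun h.choose)).q ⟨h.choose, rfl⟩⟩
  else ⟨.inr ⟨j, fun i hi => h ⟨i, hi⟩⟩, 𝟙 _⟩

noncomputable def inB : B ⟶ PObj f g G :=
  ⟨fun j => (inBaux f g G j).1, fun j => (inBaux f g G j).2⟩

lemma key_q (hf : Function.Injective f.toFun) {i' i : A.ι} (e : f.toFun i' = f.toFun i) :
    (⟨.inl (g.toFun i'),
        eqToHom (congrArg B.obj e.symm) ≫ (G (g.toFun i')).q ⟨i', rfl⟩⟩ :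
      Σ t : (PObj f g G).ι, (B.obj (f.toFun i) ⟶ (PObj f g G).obj t)) =
    ⟨.inl (g.toFun i), (G (g.toFun i)).q ⟨i, rfl⟩⟩ := by
  obtain rfl : i' = i := hf e
  simp

lemma inBaux_spec (hf : Function.Injective f.toFun) (i : A.ι) :
    inBaux f g G (f.toFun i) = ⟨.inl (g.toFun i), (G (g.toFun i)).q ⟨i, rfl⟩⟩ := by
  have h : ∃ i', f.toFun i' = f.toFun i := ⟨i, rfl⟩
  rw [inBaux, dif_pos h]
  exact key_q f g G hf h.choose_spec

lemma comm (hf : Function.Injective f.toFun) : g ≫ inC f g G = f ≫ inB f g G := by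
  refine ext_sigma fun i => ?_
  dsimp [inC, inB]
  rw [inBaux_spec f g G hf i]
  have : g.map i ≫ (G (g.toFun i)).p = f.map i ≫ (G (g.toFun i)).q ⟨i, rfl⟩ := by
    simpa using (G (g.toFun i)).comm ⟨i, rfl⟩
  rw [this]

lemma descEq (s : PushoutCocone g f) {k : C.ι} (i : Fib g k) :
    s.pt.obj (s.inr.toFun (f.toFun i.1)) = s.pt.obj (s.inl.toFun k) :=
  congrArg s.pt.obj
    (((congrFun (congrArg TwHom.toFun s.condition) i.1).symm).trans (congrArg s.inl.toFun i.2))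

lemma descComm (s : PushoutCocone g f) {k : C.ι} (i : Fib g k) :
    (g.map i.1 ≫ eqToHom (congrArg C.obj i.2)) ≫ s.inl.map k
      = f.map i.1 ≫ (s.inr.map (f.toFun i.1) ≫ eqToHom (descEq f g s i)) := by
  obtain ⟨i, rfl⟩ := i
  have h := congr_map s.condition i
  dsimp at h
  rw [comp_eqToHom_iff] at h
  simp only [eqToHom_refl, Category.comp_id, Category.id_comp]
  rw [h]
  simp [eqToHom_trans]

noncomputable def descHom (s : PushoutCocone g f) : PObj f g G ⟶ s.pt where
  toFun x := match x with
    | .inl k => s.inl.toFun k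
    | .inr j => s.inr.toFun j.1
  map x := match x with
    | .inl k => (G k).desc (s.inl.map k)
        (fun i => s.inr.map (f.toFun i.1) ≫ eqToHom (descEq f g s i))
        (fun i => descComm f g s i)
    | .inr j => s.inr.map j.1

lemma fac_left (s : PushoutCocone g f) : inC f g G ≫ descHom f g G s = s.inl := by
  refine ext' (fun k => rfl) fun k => ?_
  simp only [eqToHom_refl, Category.comp_id, comp_map]
  exact (Category.comp_id _).trans ((G k).p_desc _ _ _)

lemma fac_right (hf : Function.Injective f.toFun) (s : PushoutCocone g f) :
    inB f g G ≫ descHom f g G s = s.inr := by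
  refine ext_sigma fun j => ?_
  by_cases h : ∃ i, f.toFun i = j
  · obtain ⟨i, rfl⟩ := h
    dsimp [inB]
    rw [inBaux_spec f g G hf i]
    dsimp [descHom]
    refine sigma_hom_ext s.pt.obj
      (congrFun (congrArg TwHom.toFun s.condition) i) ?_
    rw [(G (g.toFun i)).q_desc]
    simp [eqToHom_trans]
  · dsimp [inB]
    rw [inBaux, dif_neg h]
    dsimp [descHom]
    simp

lemma uniq (hf : Function.Injective f.toFun) (s : PushoutCocone g f)
    (m : PObj f g G ⟶ s.pt) (hl : inC f g G ≫ m = s.inl) (hr : inB f g G ≫ m = s.inr) :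
    m = descHom f g G s := by
  refine ext_sigma fun x => ?_
  rcases x with k | j
  · refine sigma_hom_ext s.pt.obj (congrFun (congrArg TwHom.toFun hl) k) ?_
    refine (G k).uniq _ _ _ _ ?_ ?_
    · have h := congr_map hl k
      dsimp at h ⊢
      exact (Category.assoc _ _ _).symm.trans h
    · rintro ⟨i, rfl⟩
      have hp := hom_sigma_congr hr (f.toFun i)
      dsimp [inB] at hp
      rw [inBaux_spec f g G hf i] at hp
      dsimp at hp
      have key := hom_of_sigma_eq s.pt.obj hp
      dsimp at key ⊢
      rw [← key]
      simp [eqToHom_trans]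
      rfl
  · have hp := hom_sigma_congr hr j.1
    dsimp [inB] at hp
    rw [inBaux, dif_neg (fun hE : ∃ i, f.toFun i = j.1 => j.2 hE.choose hE.choose_spec)] at hp
    dsimp [descHom]
    obtain ⟨j, hj⟩ := j
    simpa using hp

end Main

end TwAux

open TwAux in
/-- If `D` has all pushouts, then any span `C ← A → B` in `Tw(D)` in which the morphism
`A → B` has an injective underlying function of index sets has a pushout in `Tw(D)`. -/
theorem tw_hasPushout_of_injective (D : Type u) [Category.{v} D] [HasPushouts D]
    (A B C : TwObj D) (f : A ⟶ B) (g : A ⟶ C)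
    (hf : Function.Injective (TwHom.toFun f)) :
    HasPushout g f := by
  have G : ∀ k : C.ι, Glue (C.obj k) (fun i : Fib g k => B.obj (f.toFun i.1))
      (fun i : Fib g k => A.obj i.1)
      (fun i => g.map i.1 ≫ eqToHom (congrArg C.obj i.2)) (fun i => f.map i.1) :=
    fun k => (glue_nonempty _ _ _ _ _ _).some
  exact HasColimit.mk ⟨PushoutCocone.mk (inC f g G) (inB f g G) (comm f g G hf),
    PushoutCocone.IsColimit.mk _ (descHom f g G) (fac_left f g G) (fac_right f g G hf)
      (uniq f g G hf)⟩
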